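/- For b ≥ 0 and ℓ ∈ ℕ, the string p^{b+ℓ} m^ℓ (reading digits from most significant to least significant, i.e., the vector equals sum_{i=0}^{b+2ℓ-1} M^i d_i where the ℓ least significant digits are m and the remaining b+ℓ digits are p) represents the vector (a, b)^T with a = b(b-1)/2 + 2bℓ + ℓ². -/

import Mathlib

/-- The Jordan block `[[1,1],[0,1]]`. -/
def M1 : Matrix (Fin 2) (Fin 2) ℤ := !![1, 1; 0, 1]

/-- The digit `p = (0,1)ᵀ`. -/
def pd : Fin 2 → ℤ := ![0, 1]

/-- The digit `m = (0,-1)ᵀ`. -/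
def md : Fin 2 → ℤ := ![0, -1]

/-- The vector represented by the word `d_{k-1} … d_0`, namely `∑ M^i d_i`. -/
def val1 {k : ℕ} (d : Fin k → (Fin 2 → ℤ)) : Fin 2 → ℤ :=
  ∑ i : Fin k, (M1 ^ (i : ℕ)).mulVec (d i)

lemma Mpow (n : ℕ) : M1 ^ n = !![1, (n : ℤ); 0, 1] := by
  induction n with
  | zero => simp [Matrix.one_fin_two]
  | succ n ih =>
      rw [pow_succ, ih, M1]
      rw [show ((n+1 : ℕ) : ℤ) = (n:ℤ) + 1 by push_cast; ring]
      simp [Matrix.mul_fin_two, add_comm]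

lemma mv_pd (n : ℕ) : (M1 ^ n).mulVec pd = ![(n : ℤ), 1] := by
  rw [Mpow]
  funext j
  fin_cases j <;> simp [Matrix.mulVec, pd, Fin.sum_univ_two]

lemma mv_md (n : ℕ) : (M1 ^ n).mulVec md = ![-(n : ℤ), -1] := by
  rw [Mpow]
  funext j
  fin_cases j <;> simp [Matrix.mulVec, md, Fin.sum_univ_two]

lemma gauss (n : ℕ) : 2 * ∑ i ∈ Finset.range n, (i : ℤ) = n * (n - 1) := by
  induction n with
  | zero => simp
  | succ n ih => rw [Finset.sum_range_succ]; push_cast; push_cast at ih; ring_nf; ring_nf at ih; linarith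

theorem stmt1 (b ℓ : ℕ) :
    val1 (fun i : Fin (b + 2 * ℓ) => if (i : ℕ) < ℓ then md else pd)
      = ![(b : ℤ) * ((b : ℤ) - 1) / 2 + 2 * (b : ℤ) * (ℓ : ℤ) + (ℓ : ℤ) ^ 2, (b : ℤ)] := by
  have hval : val1 (fun i : Fin (b + 2 * ℓ) => if (i : ℕ) < ℓ then md else pd)
      = ∑ i ∈ Finset.range (b + 2 * ℓ),
          (if i < ℓ then ![-(i:ℤ), -1] else ![(i:ℤ), 1]) := by
    rw [val1, ← Fin.sum_univ_eq_sum_range]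
    refine Finset.sum_congr rfl fun i _ => ?_
    by_cases h : (i : ℕ) < ℓ <;> simp only [h, ↓reduceIte, mv_pd, mv_md]
  -- obtain e with B*(B-1) = 2*e
  obtain ⟨e, he⟩ : ∃ e : ℤ, (b:ℤ) * ((b:ℤ) - 1) = 2 * e := by
    rcases Nat.even_or_odd b with h | h
    · obtain ⟨c, hc⟩ := h
      exact ⟨c * ((b:ℤ)-1), by push_cast [hc]; ring⟩
    · obtain ⟨c, hc⟩ := h
      exact ⟨(b:ℤ) * c, by push_cast [hc]; ring⟩
  have hdiv : (b:ℤ) * ((b:ℤ) - 1) / 2 = e := by omega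
  rw [hval, hdiv]
  funext j
  have hsplit : ∀ f : ℕ → ℤ, ∑ i ∈ Finset.range (b + 2 * ℓ), f i
      = ∑ i ∈ Finset.range ℓ, f i + ∑ i ∈ Finset.range (b + ℓ), f (ℓ + i) := by
    intro f
    rw [show b + 2 * ℓ = ℓ + (b + ℓ) by ring, Finset.sum_range_add]
  fin_cases j
  · simp only [Finset.sum_apply, Fin.mk_zero, Fin.mk_one]
    rw [hsplit]
    have h1 : ∑ i ∈ Finset.range ℓ,
        (if i < ℓ then ![-(i:ℤ), -1] else ![(i:ℤ), 1]) 0 = -∑ i ∈ Finset.range ℓ, (i:ℤ) := by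
      rw [← Finset.sum_neg_distrib]
      refine Finset.sum_congr rfl fun i hi => ?_
      simp [Finset.mem_range.mp hi]
    have h2 : ∑ i ∈ Finset.range (b + ℓ),
        (if ℓ + i < ℓ then ![-((ℓ + i : ℕ):ℤ), -1] else ![((ℓ + i : ℕ):ℤ), 1]) 0
        = ∑ i ∈ Finset.range (b + ℓ), ((ℓ:ℤ) + i) := by
      refine Finset.sum_congr rfl fun i hi => ?_
      have : ¬ (ℓ + i < ℓ) := by omega
      simp [this]
    rw [h1, h2]
    have g1 := gauss ℓ
    have g2 := gauss (b + ℓ)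
    simp only [Finset.sum_add_distrib, Finset.sum_const, Finset.card_range, nsmul_eq_mul,
      Matrix.cons_val_zero]
    push_cast at g1 g2 ⊢
    nlinarith [g1, g2, he]
  · simp only [Finset.sum_apply, Fin.mk_zero, Fin.mk_one]
    rw [hsplit]
    have h1 : ∑ i ∈ Finset.range ℓ,
        (if i < ℓ then ![-(i:ℤ), -1] else ![(i:ℤ), 1]) 1 = -(ℓ : ℤ) := by
      rw [Finset.sum_congr rfl (fun i hi => by simp [Finset.mem_range.mp hi] : ∀ i ∈ Finset.range ℓ, _ = (-1:ℤ))]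
      simp
    have h2 : ∑ i ∈ Finset.range (b + ℓ),
        (if ℓ + i < ℓ then ![-((ℓ + i : ℕ):ℤ), -1] else ![((ℓ + i : ℕ):ℤ), 1]) 1
        = ((b + ℓ : ℕ) : ℤ) := by
      rw [Finset.sum_congr rfl (fun i hi => by simp : ∀ i ∈ Finset.range (b+ℓ), _ = (1:ℤ))]
      simp
    rw [h1, h2]
    push_cast
    ring
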